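/- For every permutation v₁,…,vₙ of V with associated greedy vector h, and for every x ∈ [0,1]^n, one has ⟨h, x⟩ = Σ_{i=1}^n h_i x_i ≤ f̂(x). In particular, the hyperplane ⟨h, x⟩ ≤ f̂(x̄) through a query point x̄ (ordered so that x̄_{v_1} ≥ ⋯ ≥ x̄_{v_n}) does not cut away any minimizer of f̂ over [0,1]^n. -/

import Mathlib

open MeasureTheory

/-- The Lovász extension of a set function `f` on the ground set `Fin n`:
`f̂(x) = ∫₀¹ f({i : xᵢ ≥ t}) dt`. -/
noncomputable def lovasz (n : ℕ) (f : Finset (Fin n) → ℝ) (x : Fin n → ℝ) : ℝ :=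
  ∫ t in (0:ℝ)..1, f (Finset.univ.filter fun i => t ≤ x i)

/-- The greedy vector associated with a permutation `v` of the ground set `Fin n`:
its value at the element `v i` is `f({v 0, …, v i}) − f({v 0, …, v (i-1)})`. -/
noncomputable def greedyVec (n : ℕ) (f : Finset (Fin n) → ℝ) (v : Equiv.Perm (Fin n)) :
    Fin n → ℝ :=
  fun j => f ((Finset.Iic (v.symm j)).image v) - f ((Finset.Iio (v.symm j)).image v)


lemma mem_image_Iio {n : ℕ} (v : Equiv.Perm (Fin n)) (i j : Fin n) :
    j ∈ (Finset.Iio i).image v ↔ v.symm j < i := by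
  simp only [Finset.mem_image, Finset.mem_Iio]
  constructor
  · rintro ⟨b, hb, rfl⟩; simpa using hb
  · intro h; exact ⟨v.symm j, h, v.apply_symm_apply j⟩

lemma mem_image_Iic {n : ℕ} (v : Equiv.Perm (Fin n)) (i j : Fin n) :
    j ∈ (Finset.Iic i).image v ↔ v.symm j ≤ i := by
  simp only [Finset.mem_image, Finset.mem_Iic]
  constructor
  · rintro ⟨b, hb, rfl⟩; simpa using hb
  · intro h; exact ⟨v.symm j, h, v.apply_symm_apply j⟩

lemma sum_greedy_le (n : ℕ) (f : Finset (Fin n) → ℝ)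
    (hsub : ∀ A B : Finset (Fin n), f (A ∪ B) + f (A ∩ B) ≤ f A + f B)
    (hf0 : f ∅ = 0) (v : Equiv.Perm (Fin n)) (S : Finset (Fin n)) :
    ∑ j ∈ S, greedyVec n f v j ≤ f S := by
  have key : ∀ k : ℕ,
      ∑ j ∈ S.filter (fun j => ((v.symm j : ℕ) < k)), greedyVec n f v j ≤
        f (S.filter fun j => ((v.symm j : ℕ) < k)) := by
    intro k
    induction k with
    | zero => simp [hf0]
    | succ k ih =>
      by_cases hk : k < n
      · set a := v ⟨k, hk⟩ with ha
        have hsymm : v.symm a = ⟨k, hk⟩ := v.symm_apply_apply _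
        have hval : ((v.symm a : Fin n) : ℕ) = k := by rw [hsymm]
        have hfilt : ∀ j : Fin n, ((v.symm j : ℕ) < k + 1) ↔ ((v.symm j : ℕ) < k ∨ j = a) := by
          intro j
          constructor
          · intro h
            rcases Nat.lt_succ_iff_lt_or_eq.mp h with h | h
            · exact Or.inl h
            · right
              have : v.symm j = ⟨k, hk⟩ := Fin.ext h
              rw [← v.apply_symm_apply j, this]
          · rintro (h | rfl)
            · omega
            · omega
        by_cases haS : a ∈ S
        · have hins : S.filter (fun j => (v.symm j : ℕ) < k + 1) =
              insert a (S.filter fun j => (v.symm j : ℕ) < k) := by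
            ext j
            simp only [Finset.mem_filter, Finset.mem_insert, hfilt]
            constructor
            · rintro ⟨hjS, h | rfl⟩
              · exact Or.inr ⟨hjS, h⟩
              · exact Or.inl rfl
            · rintro (rfl | ⟨hjS, h⟩)
              · exact ⟨haS, Or.inr rfl⟩
              · exact ⟨hjS, Or.inl h⟩
          have hanotin : a ∉ S.filter fun j => (v.symm j : ℕ) < k := by
            simp [hsymm]
          rw [hins, Finset.sum_insert hanotin]
          -- submodularity step
          have hA : ((Finset.Iio (⟨k, hk⟩ : Fin n)).image v : Finset (Fin n)) ∪
              insert a (S.filter fun j => (v.symm j : ℕ) < k) =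
              (Finset.Iic (⟨k, hk⟩ : Fin n)).image v := by
            ext j
            simp only [Finset.mem_union, mem_image_Iio, mem_image_Iic, Finset.mem_insert,
              Finset.mem_filter, Fin.lt_def, Fin.le_def]
            constructor
            · rintro (h | rfl | ⟨hjS, h⟩)
              · omega
              · omega
              · omega
            · intro h
              rcases Nat.lt_succ_iff_lt_or_eq.mp (Nat.lt_succ_of_le h) with h' | h'
              · exact Or.inl h'
              · right; left
                have : v.symm j = ⟨k, hk⟩ := Fin.ext h'
                rw [← v.apply_symm_apply j, this]
          have hB : ((Finset.Iio (⟨k, hk⟩ : Fin n)).image v : Finset (Fin n)) ∩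
              insert a (S.filter fun j => (v.symm j : ℕ) < k) =
              S.filter fun j => (v.symm j : ℕ) < k := by
            ext j
            simp only [Finset.mem_inter, mem_image_Iio, Finset.mem_insert, Finset.mem_filter,
              Fin.lt_def]
            constructor
            · rintro ⟨h, rfl | ⟨hjS, h'⟩⟩
              · omega
              · exact ⟨hjS, h'⟩
            · rintro ⟨hjS, h⟩; exact ⟨h, Or.inr ⟨hjS, h⟩⟩
          have sub := hsub ((Finset.Iio (⟨k, hk⟩ : Fin n)).image v)
            (insert a (S.filter fun j => (v.symm j : ℕ) < k))
          rw [hA, hB] at sub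
          have hga : greedyVec n f v a =
              f ((Finset.Iic (⟨k, hk⟩ : Fin n)).image v) -
                f ((Finset.Iio (⟨k, hk⟩ : Fin n)).image v) := by
            rw [greedyVec, hsymm]
          rw [hga]
          linarith
        · have heq : S.filter (fun j => (v.symm j : ℕ) < k + 1) =
              S.filter fun j => (v.symm j : ℕ) < k := by
            ext j
            simp only [Finset.mem_filter, hfilt]
            constructor
            · rintro ⟨hjS, h | rfl⟩
              · exact ⟨hjS, h⟩
              · exact absurd hjS haS
            · rintro ⟨hjS, h⟩; exact ⟨hjS, Or.inl h⟩
          rw [heq]; exact ih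
      · have heq : S.filter (fun j => (v.symm j : ℕ) < k + 1) =
            S.filter fun j => (v.symm j : ℕ) < k := by
          ext j
          have := (v.symm j).isLt
          simp only [Finset.mem_filter, and_congr_right_iff]
          intro _
          omega
        rw [heq]; exact ih
  have := key n
  have hall : S.filter (fun j => (v.symm j : ℕ) < n) = S := by
    ext j; simp [(v.symm j).isLt]
  rwa [hall] at this
lemma indicator_intervalIntegrable (a b : ℝ) {s : Set ℝ} (hs : MeasurableSet s) (c : ℝ) :
    IntervalIntegrable (s.indicator fun _ => c) volume a b := by
  rw [intervalIntegrable_iff]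
  exact ((integrableOn_const_iff (C := c)).mpr (Or.inr measure_Ioc_lt_top)).indicator hs

lemma step_integrable (n : ℕ) (f : Finset (Fin n) → ℝ) (x : Fin n → ℝ) :
    IntervalIntegrable (fun t => f (Finset.univ.filter fun i => t ≤ x i)) volume 0 1 := by
  have hrep : (fun t : ℝ => f (Finset.univ.filter fun i => t ≤ x i)) =
      fun t => ∑ A : Finset (Fin n),
        Set.indicator {s : ℝ | Finset.univ.filter (fun i => s ≤ x i) = A} (fun _ => f A) t := by
    funext t
    rw [Finset.sum_eq_single (Finset.univ.filter fun i => t ≤ x i)]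
    · rw [Set.indicator_of_mem (by simp)]
    · intro B _ hB
      apply Set.indicator_of_notMem
      simp only [Set.mem_setOf_eq]
      exact fun h => hB h.symm
    · intro h; exact absurd (Finset.mem_univ _) h
  rw [hrep]
  have := IntervalIntegrable.sum (μ := volume) (a := (0:ℝ)) (b := 1)
    (Finset.univ : Finset (Finset (Fin n)))
    (f := fun A => Set.indicator {s : ℝ | Finset.univ.filter (fun i => s ≤ x i) = A}
      (fun _ => f A)) (fun A _ => ?_)
  · rwa [Finset.sum_fn] at this
  apply indicator_intervalIntegrable
  have : {s : ℝ | Finset.univ.filter (fun i => s ≤ x i) = A} =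
      (⋂ i ∈ A, Set.Iic (x i)) ∩ ⋂ i ∈ Aᶜ, Set.Ioi (x i) := by
    ext s
    simp only [Set.mem_setOf_eq, Finset.ext_iff, Finset.mem_filter, Finset.mem_univ, true_and,
      Set.mem_inter_iff, Set.mem_iInter, Set.mem_Iic, Set.mem_Ioi, Finset.mem_compl]
    constructor
    · intro h
      exact ⟨fun i hi => (h i).mpr hi, fun i hi => lt_of_not_ge fun hs => hi ((h i).mp hs)⟩
    · rintro ⟨h1, h2⟩ i
      constructor
      · intro hs
        by_contra hiA
        exact absurd hs (not_le.mpr (h2 i hiA))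
      · exact h1 i
  rw [this]
  exact (MeasurableSet.biInter (Set.to_countable _) fun i _ => measurableSet_Iic).inter
    (MeasurableSet.biInter (Set.to_countable _) fun i _ => measurableSet_Ioi)

theorem stmt3 (n : ℕ) (hn : 1 ≤ n) (f : Finset (Fin n) → ℝ)
    (hsub : ∀ A B : Finset (Fin n), f (A ∪ B) + f (A ∩ B) ≤ f A + f B)
    (hf0 : f ∅ = 0) (v : Equiv.Perm (Fin n)) :
    (∀ x ∈ Set.Icc (0 : Fin n → ℝ) 1,
        ∑ i : Fin n, greedyVec n f v i * x i ≤ lovasz n f x) ∧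
      ∀ xbar ∈ Set.Icc (0 : Fin n → ℝ) 1,
        (∀ i j : Fin n, i ≤ j → xbar (v j) ≤ xbar (v i)) →
        ∀ y ∈ Set.Icc (0 : Fin n → ℝ) 1,
          (∀ z ∈ Set.Icc (0 : Fin n → ℝ) 1, lovasz n f y ≤ lovasz n f z) →
          ∑ i : Fin n, greedyVec n f v i * y i ≤ lovasz n f xbar := by
  have main : ∀ x ∈ Set.Icc (0 : Fin n → ℝ) 1,
      ∑ i : Fin n, greedyVec n f v i * x i ≤ lovasz n f x := by
    intro x hx
    have hxi : ∀ i, x i ∈ Set.Icc (0 : ℝ) 1 := fun i => ⟨hx.1 i, hx.2 i⟩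
    have hint_i : ∀ i : Fin n,
        IntervalIntegrable (Set.indicator {s : ℝ | s ≤ x i} fun _ => greedyVec n f v i)
          volume 0 1 :=
      fun i => indicator_intervalIntegrable _ _ measurableSet_Iic _
    have h1 : ∀ i : Fin n, greedyVec n f v i * x i =
        ∫ t in (0:ℝ)..1, Set.indicator {s : ℝ | s ≤ x i} (fun _ => greedyVec n f v i) t := by
      intro i
      rw [intervalIntegral.integral_indicator (hxi i), intervalIntegral.integral_const]
      ring_nf
    calc ∑ i : Fin n, greedyVec n f v i * x i
        = ∑ i : Fin n, ∫ t in (0:ℝ)..1,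
            Set.indicator {s : ℝ | s ≤ x i} (fun _ => greedyVec n f v i) t := by
          exact Finset.sum_congr rfl fun i _ => h1 i
      _ = ∫ t in (0:ℝ)..1, ∑ i : Fin n,
            Set.indicator {s : ℝ | s ≤ x i} (fun _ => greedyVec n f v i) t :=
          (intervalIntegral.integral_finset_sum fun i _ => hint_i i).symm
      _ ≤ lovasz n f x := by
          rw [lovasz]
          have hsum : IntervalIntegrable (fun t => ∑ i : Fin n,
              Set.indicator {s : ℝ | s ≤ x i} (fun _ => greedyVec n f v i) t) volume 0 1 := by
            have := IntervalIntegrable.sum (μ := volume) (a := (0:ℝ)) (b := 1)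
              (Finset.univ : Finset (Fin n))
              (f := fun i => Set.indicator {s : ℝ | s ≤ x i} (fun _ => greedyVec n f v i))
              (fun i _ => hint_i i)
            rwa [Finset.sum_fn] at this
          apply intervalIntegral.integral_mono_on (by norm_num) hsum (step_integrable n f x)
          intro t _
          have : ∑ i : Fin n,
              Set.indicator {s : ℝ | s ≤ x i} (fun _ => greedyVec n f v i) t =
              ∑ i ∈ Finset.univ.filter (fun i => t ≤ x i), greedyVec n f v i := by
            rw [Finset.sum_filter]
            exact Finset.sum_congr rfl fun i _ => by
              by_cases h : t ≤ x i <;> simp [Set.indicator_apply, h]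
          rw [this]
          exact sum_greedy_le n f hsub hf0 v _
  refine ⟨main, fun xbar hxbar _ y hy hmin => ?_⟩
  exact le_trans (main y hy) (hmin xbar hxbar)
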